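/- (Ordering lemma, general dimension.) For every fixed integer d ≥ 1 there is a constant C_d > 0 with the following property. Let V be a finite set with |V| = n ≥ 2, let w : V × V → ℝ≥0 be symmetric with w(v,v) = 0, let dist be a metric on V satisfying the d-dimensional spreading constraints, and let v₀ ∈ V. Then there exists a bijection q : V → {0, 1, …, n−1} with q(v₀) = 0 such that ∑_{{u,v}} w(u,v) · |q(u) − q(v)|^{1/d} ≤ C_d · log n · ∑_{{u,v}} w(u,v) · dist(u,v). -/

import Mathlib

open scoped BigOperators

/-- `dist` is a metric on `V`. -/
def IsMetric {V : Type*} (dist : V → V → ℝ) : Prop :=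
  (∀ x, dist x x = 0) ∧ (∀ x y, 0 ≤ dist x y) ∧ (∀ x y, dist x y = dist y x) ∧
  (∀ x y z, dist x z ≤ dist x y + dist y z) ∧ (∀ x y, dist x y = 0 → x = y)

/-- `dist` satisfies the `d`-dimensional spreading constraints. -/
def Spreading {V : Type*} (d : ℕ) (dist : V → V → ℝ) : Prop :=
  ∀ S : Finset V, ∀ u ∈ S,
    ((S.card : ℝ) - 1) ^ ((1 : ℝ) + 1 / (d : ℝ)) / 4 ≤ ∑ v ∈ S, dist u v

open scoped Classical
open Finset




/-- Harmonic sum bound. -/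
lemma OL_harm : ∀ n : ℕ, (∑ k ∈ Finset.range n, (1:ℝ)/(k+1)) ≤ 1 + Real.log n := by
  intro n
  induction n with
  | zero => simp
  | succ m ih =>
    rcases Nat.eq_zero_or_pos m with hm | hm
    · subst hm; simp
    rw [Finset.sum_range_succ]
    have h1 : (1:ℝ)/(m+1) ≤ Real.log (m+1) - Real.log m := by
      have hmpos : (0:ℝ) < m := by exact_mod_cast hm
      have hx : Real.log ((m:ℝ)/(m+1)) ≤ (m:ℝ)/(m+1) - 1 :=
        Real.log_le_sub_one_of_pos (by positivity)
      rw [Real.log_div (by positivity) (by positivity)] at hx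
      have : (m:ℝ)/(m+1) - 1 = -(1/(m+1)) := by field_simp; ring
      rw [this] at hx
      linarith
    have : Real.log ((m:ℕ):ℝ) + 1/(m+1) ≤ Real.log ((m+1:ℕ):ℝ) := by
      push_cast
      linarith
    push_cast
    push_cast at ih
    linarith

/-- Rank sum bound: sum of reciprocal ranks. -/
lemma OL_ranksum {V : Type} [DecidableEq V] (f : V → ℝ) :
    ∀ (n : ℕ) (s : Finset V), s.card = n →
      (∑ x ∈ s, (1:ℝ)/((s.filter fun z => f z ≤ f x).card)) ≤
        ∑ k ∈ Finset.range n, (1:ℝ)/(k+1) := by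
  intro n
  induction n with
  | zero =>
    intro s hs
    rw [Finset.card_eq_zero] at hs; subst hs; simp
  | succ m ih =>
    intro s hs
    have hsne : s.Nonempty := Finset.card_pos.mp (by omega)
    obtain ⟨x, hxs, hx⟩ := Finset.exists_max_image s f hsne
    have hterm : (s.filter fun z => f z ≤ f x) = s := by
      apply Finset.filter_true_of_mem
      intro z hz; exact hx z hz
    have hsplit := Finset.add_sum_erase s
      (fun y => (1:ℝ)/((s.filter fun z => f z ≤ f y).card)) hxs
    have hcard : (s.erase x).card = m := by
      rw [Finset.card_erase_of_mem hxs, hs]; rfl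
    have hmono : ∀ y ∈ s.erase x,
        (1:ℝ)/((s.filter fun z => f z ≤ f y).card) ≤
        (1:ℝ)/(((s.erase x).filter fun z => f z ≤ f y).card) := by
      intro y hy
      have hy' : y ∈ (s.erase x).filter fun z => f z ≤ f y :=
        Finset.mem_filter.mpr ⟨hy, le_refl _⟩
      have hpos : 0 < (((s.erase x).filter fun z => f z ≤ f y).card : ℝ) := by
        have := Finset.card_pos.mpr ⟨y, hy'⟩
        exact_mod_cast this
      apply one_div_le_one_div_of_le hpos
      exact_mod_cast Finset.card_le_card
        (Finset.filter_subset_filter _ (Finset.erase_subset x s))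
    calc ∑ y ∈ s, (1:ℝ)/((s.filter fun z => f z ≤ f y).card)
        = (1:ℝ)/((s.filter fun z => f z ≤ f x).card)
          + ∑ y ∈ s.erase x, (1:ℝ)/((s.filter fun z => f z ≤ f y).card) := hsplit.symm
      _ ≤ (1:ℝ)/(s.card)
          + ∑ y ∈ s.erase x, (1:ℝ)/(((s.erase x).filter fun z => f z ≤ f y).card) := by
          rw [hterm]
          exact add_le_add (le_refl _) (Finset.sum_le_sum hmono)
      _ ≤ (1:ℝ)/(m+1) + ∑ k ∈ Finset.range m, (1:ℝ)/(k+1) := by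
          rw [hs]
          push_cast
          exact add_le_add (le_refl _) (ih _ hcard)
      _ = ∑ k ∈ Finset.range (m+1), (1:ℝ)/(k+1) := by
          rw [Finset.sum_range_succ]; push_cast; ring


/-- Counting integers in a half-open real interval. -/
lemma OL_intcount (M : ℕ) (x y : ℝ) (hxy : x ≤ y) :
    ((Finset.univ.filter fun m : Fin M => x ≤ (m:ℝ) ∧ (m:ℝ) < y).card : ℝ) ≤ y - x + 1 := by
  set s := Finset.univ.filter fun m : Fin M => x ≤ (m:ℝ) ∧ (m:ℝ) < y with hs
  have hyx : (0:ℝ) ≤ y - x := by linarith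
  have hcard : s.card ≤ Nat.floor (y - x) + 1 := by
    have : s.card ≤ (Finset.range (Nat.floor (y-x) + 1)).card := by
      refine Finset.card_le_card_of_injOn (fun m => (m:ℕ) - Nat.ceil x) ?_ ?_
      · intro m hm
        rw [Finset.mem_coe, hs, Finset.mem_filter] at hm
        obtain ⟨-, hm1, hm2⟩ := hm
        rw [Finset.mem_coe, Finset.mem_range]
        show (m:ℕ) - Nat.ceil x < _
        have hcm : Nat.ceil x ≤ (m:ℕ) := by
          rcases le_or_gt x 0 with h | h
          · have : Nat.ceil x = 0 := Nat.ceil_eq_zero.mpr h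
            omega
          · exact Nat.ceil_le.mpr hm1
        have hcast : (((m:ℕ) - Nat.ceil x : ℕ) : ℝ) = ((m:ℕ):ℝ) - (Nat.ceil x : ℝ) := by
          push_cast [hcm]; ring
        have hxle : x ≤ (Nat.ceil x : ℝ) := Nat.le_ceil x
        have : (((m:ℕ) - Nat.ceil x : ℕ) : ℝ) < y - x := by
          rw [hcast]; linarith
        have := (Nat.lt_floor_add_one (y - x)).trans_le (le_refl _)
        have hlt : (((m:ℕ) - Nat.ceil x : ℕ) : ℝ) < (Nat.floor (y-x) : ℝ) + 1 := by
          calc (((m:ℕ) - Nat.ceil x : ℕ) : ℝ) < y - x := by rw [hcast]; linarith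
            _ < (Nat.floor (y-x) : ℝ) + 1 := Nat.lt_floor_add_one _
        exact_mod_cast hlt
      · intro a ha b hb hab
        have ha2 := (Finset.mem_filter.mp (Finset.mem_coe.mp ha)).2
        have hb2 := (Finset.mem_filter.mp (Finset.mem_coe.mp hb)).2
        have hca : Nat.ceil x ≤ (a:ℕ) := by
          rcases le_or_gt x 0 with h | h
          · have : Nat.ceil x = 0 := Nat.ceil_eq_zero.mpr h; omega
          · exact Nat.ceil_le.mpr ha2.1
        have hcb : Nat.ceil x ≤ (b:ℕ) := by
          rcases le_or_gt x 0 with h | h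
          · have : Nat.ceil x = 0 := Nat.ceil_eq_zero.mpr h; omega
          · exact Nat.ceil_le.mpr hb2.1
        have hab' : (a:ℕ) - Nat.ceil x = (b:ℕ) - Nat.ceil x := hab
        have : (a:ℕ) = (b:ℕ) := by omega
        exact Fin.ext this
    simpa using this
  calc (s.card : ℝ) ≤ (Nat.floor (y-x) : ℝ) + 1 := by exact_mod_cast hcard
    _ ≤ (y - x) + 1 := by
        have := Nat.floor_le hyx
        linarith

/-- At most 3 dyadic scales in a window of ratio 8. -/
lemma OL_dyadic (s : Finset ℕ) (A : ℝ) (hA : 0 < A)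
    (h : ∀ j ∈ s, A < 2^j ∧ (2:ℝ)^j < 8*A) : s.card ≤ 3 := by
  rcases s.eq_empty_or_nonempty with rfl | hne
  · simp
  have hsub : s ⊆ Finset.Icc (s.min' hne) (s.min' hne + 2) := by
    intro j hj
    rw [Finset.mem_Icc]
    refine ⟨Finset.min'_le s j hj, ?_⟩
    by_contra hc
    push_neg at hc
    have hj3 : s.min' hne + 3 ≤ j := by omega
    have h1 := (h _ (Finset.min'_mem s hne)).1
    have h2 := (h j hj).2
    have : (2:ℝ)^(s.min' hne + 3) ≤ 2^j := by
      apply pow_le_pow_right₀ (by norm_num) hj3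
    rw [pow_add] at this
    norm_num at this
    nlinarith
  calc s.card ≤ (Finset.Icc (s.min' hne) (s.min' hne + 2)).card := Finset.card_le_card hsub
    _ = 3 := by rw [Nat.card_Icc]; omega

/-- Geometric sum of small scales. -/
lemma OL_lowsum (L : ℕ) (t : ℝ) (ht : 0 < t) :
    ∑ j ∈ (Finset.range L).filter (fun j => (2:ℝ)^j ≤ 2*t), (2:ℝ)^j ≤ 4*t := by
  set s := (Finset.range L).filter (fun j => (2:ℝ)^j ≤ 2*t) with hs
  rcases s.eq_empty_or_nonempty with h | hne
  · rw [h]; simp; linarith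
  have hmax : ∀ j ∈ s, j ≤ s.max' hne := fun j hj => Finset.le_max' s j hj
  have hsub : s ⊆ Finset.range (s.max' hne + 1) := by
    intro j hj; rw [Finset.mem_range]; exact Nat.lt_succ_of_le (hmax j hj)
  calc ∑ j ∈ s, (2:ℝ)^j ≤ ∑ j ∈ Finset.range (s.max' hne + 1), (2:ℝ)^j := by
        apply Finset.sum_le_sum_of_subset_of_nonneg hsub
        intro j _ _; positivity
    _ = 2^(s.max' hne + 1) - 1 := by
        rw [geom_sum_eq (by norm_num)]; norm_num
    _ ≤ 2 * (2*t) := by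
        have hmem := Finset.min'_mem s hne
        have h2 : (2:ℝ)^(s.max' hne) ≤ 2*t :=
          (Finset.mem_filter.mp (Finset.max'_mem s hne)).2
        rw [pow_succ]
        nlinarith
    _ = 4*t := by ring



variable {V : Type} [Fintype V] [DecidableEq V]

/-- The π-minimal element of a nonempty finset. -/
noncomputable def OLpmin {n : ℕ} (π : V ≃ Fin n) (S : Finset V) (h : S.Nonempty) : V :=
  π.symm ((S.image π).min' (h.image π))

lemma OLpmin_mem {n : ℕ} (π : V ≃ Fin n) (S : Finset V) (h : S.Nonempty) :
    OLpmin π S h ∈ S := by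
  have := Finset.min'_mem (S.image π) (h.image π)
  rw [Finset.mem_image] at this
  obtain ⟨a, ha, hay⟩ := this
  have : π.symm ((S.image π).min' (h.image π)) = a := by rw [← hay]; simp
  rw [OLpmin, this]; exact ha

lemma OLpmin_le {n : ℕ} (π : V ≃ Fin n) (S : Finset V) (h : S.Nonempty)
    (z : V) (hz : z ∈ S) : π (OLpmin π S h) ≤ π z := by
  rw [OLpmin]
  simp only [Equiv.apply_symm_apply]
  exact Finset.min'_le _ _ (Finset.mem_image_of_mem π hz)

lemma OLpmin_lt {n : ℕ} (π : V ≃ Fin n) (S : Finset V) (h : S.Nonempty)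
    (z : V) (hz : z ∈ S) (hne : z ≠ OLpmin π S h) : π (OLpmin π S h) < π z := by
  have hle := OLpmin_le π S h z hz
  rcases lt_or_eq_of_le hle with h1 | h1
  · exact h1
  · exact absurd (π.injective h1).symm hne

/-- If the min of the superset lies in the subset, the minima coincide. -/
lemma OLpmin_subset {n : ℕ} (π : V ≃ Fin n) (S T : Finset V) (hS : S.Nonempty)
    (hT : T.Nonempty) (hsub : S ⊆ T) (hmem : OLpmin π T hT ∈ S) :
    OLpmin π S hS = OLpmin π T hT := by
  have h1 : π (OLpmin π S hS) ≤ π (OLpmin π T hT) := OLpmin_le π S hS _ hmem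
  have h2 : π (OLpmin π T hT) ≤ π (OLpmin π S hS) :=
    OLpmin_le π T hT _ (hsub (OLpmin_mem π S hS))
  exact π.injective (le_antisymm h1 h2)

/-- Permutation counting: the number of orders making `w` the minimum of `S`,
times `|S|`, is the total number of orders. -/
lemma OL_permcount (S : Finset V) (w : V) (hw : w ∈ S) :
    (Finset.univ.filter fun π : V ≃ Fin (Fintype.card V) =>
      ∀ z ∈ S, z ≠ w → π w < π z).card * S.card
      = Fintype.card (V ≃ Fin (Fintype.card V)) := by
  classical
  set n := Fintype.card V
  have hSne : S.Nonempty := ⟨w, hw⟩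
  -- the classes
  set P : V → Finset (V ≃ Fin n) :=
    fun z => Finset.univ.filter fun π => ∀ y ∈ S, y ≠ z → π z < π y with hP
  -- partition
  have hcover : (Finset.univ : Finset (V ≃ Fin n)) = S.biUnion P := by
    apply Finset.ext
    intro π
    simp only [Finset.mem_univ, true_iff, Finset.mem_biUnion]
    refine ⟨OLpmin π S hSne, OLpmin_mem π S hSne, ?_⟩
    rw [hP]
    simp only [Finset.mem_filter, Finset.mem_univ, true_and]
    intro y hy hyne
    exact OLpmin_lt π S hSne y hy hyne
  have hdisj : ∀ z₁ ∈ S, ∀ z₂ ∈ S, z₁ ≠ z₂ → Disjoint (P z₁) (P z₂) := by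
    intro z₁ h₁ z₂ h₂ hne
    rw [Finset.disjoint_left]
    intro π hπ₁ hπ₂
    rw [hP] at hπ₁ hπ₂
    simp only [Finset.mem_filter, Finset.mem_univ, true_and] at hπ₁ hπ₂
    have a1 := hπ₁ z₂ h₂ (Ne.symm hne)
    have a2 := hπ₂ z₁ h₁ hne
    exact absurd (a1.trans a2) (lt_irrefl _)
  -- all classes have equal cardinality
  have hequal : ∀ z ∈ S, (P z).card = (P w).card := by
    intro z hz
    rcases eq_or_ne z w with rfl | hzw
    · rfl
    apply Finset.card_bij (fun π _ => (Equiv.swap w z).trans π)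
    ·
      intro π hπ
      rw [hP] at hπ ⊢
      simp only [Finset.mem_filter, Finset.mem_univ, true_and] at hπ ⊢
      intro y hy hyw
      simp only [Equiv.trans_apply]
      rw [Equiv.swap_apply_left]
      rcases eq_or_ne y z with rfl | hyz
      · rw [Equiv.swap_apply_right]
        exact hπ w hw hzw.symm
      · rw [Equiv.swap_apply_of_ne_of_ne hyw hyz]
        exact hπ y hy hyz
    · intro π₁ h₁ π₂ h₂ heq
      have : (Equiv.swap w z).symm.trans ((Equiv.swap w z).trans π₁)
           = (Equiv.swap w z).symm.trans ((Equiv.swap w z).trans π₂) := by rw [heq]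
      simpa [← Equiv.trans_assoc] using this
    · intro σ hσ
      refine ⟨(Equiv.swap w z).trans σ, ?_, ?_⟩
      · rw [hP] at hσ ⊢
        simp only [Finset.mem_filter, Finset.mem_univ, true_and] at hσ ⊢
        intro y hy hyz
        simp only [Equiv.trans_apply]
        rw [Equiv.swap_apply_right]
        rcases eq_or_ne y w with rfl | hyw
        · rw [Equiv.swap_apply_left]
          exact hσ z hz hzw
        · rw [Equiv.swap_apply_of_ne_of_ne hyw hyz]
          exact hσ y hy hyw
      · ext x
        simp [Equiv.trans_apply, Equiv.swap_apply_self]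
  have hcard : Fintype.card (V ≃ Fin n) = ∑ z ∈ S, (P z).card := by
    rw [← Finset.card_univ, hcover, Finset.card_biUnion hdisj]
  rw [hcard, Finset.sum_congr rfl hequal, Finset.sum_const, smul_eq_mul, mul_comm]


/-- Key of a digit sequence. -/
def OLkey (B L : ℕ) (a : ℕ → ℕ) : ℕ := ∑ j ∈ Finset.range L, a j * B^j

def OLhi (B L : ℕ) (a : ℕ → ℕ) (m : ℕ) : ℕ := ∑ j ∈ Finset.Ico m L, a j * B^(j-m)

lemma OL_lowpart_lt (B L : ℕ) (a : ℕ → ℕ) (hB : 1 ≤ B) (m : ℕ)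
    (h : ∀ j, j < m → a j < B) : ∑ j ∈ Finset.range m, a j * B^j < B^m := by
  induction m with
  | zero => simpa using Nat.pow_pos (n := 0) (by omega : 0 < B)
  | succ k ih =>
    rw [Finset.sum_range_succ]
    have h1 : ∑ j ∈ Finset.range k, a j * B^j < B^k := ih (fun j hj => h j (by omega))
    have h2 : a k ≤ B - 1 := by have := h k (by omega); omega
    have h3 : a k * B^k ≤ (B-1) * B^k := Nat.mul_le_mul_right _ h2
    have hbk : 0 < B^k := Nat.pow_pos (n := k) (by omega)
    have : (B-1) * B^k + B^k = B^(k+1) := by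
      rw [pow_succ]
      have : (B-1) * B^k + B^k = ((B-1)+1) * B^k := by ring
      rw [this, Nat.sub_add_cancel hB, mul_comm]
    omega

lemma OLhi_div (B L : ℕ) (a : ℕ → ℕ) (hB : 1 ≤ B) (m : ℕ) (hm : m ≤ L)
    (h : ∀ j, j < L → a j < B) : OLkey B L a / B^m = OLhi B L a m := by
  have hsplit : OLkey B L a = (∑ j ∈ Finset.range m, a j * B^j) + B^m * OLhi B L a m := by
    rw [OLkey, OLhi, ← Finset.sum_range_add_sum_Ico _ hm, Finset.mul_sum]
    congr 1
    apply Finset.sum_congr rfl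
    intro j hj
    rw [Finset.mem_Ico] at hj
    have : B^(j-m) * B^m = B^j := by
      rw [← pow_add]; congr 1; omega
    calc a j * B^j = a j * (B^(j-m) * B^m) := by rw [this]
      _ = B^m * (a j * B^(j-m)) := by ring
  rw [hsplit]
  have hlow : ∑ j ∈ Finset.range m, a j * B^j < B^m :=
    OL_lowpart_lt B L a hB m (fun j hj => h j (by omega))
  have hBm : 0 < B^m := Nat.pow_pos (n := m) (by omega)
  rw [Nat.add_mul_div_left _ _ hBm, Nat.div_eq_of_lt hlow, zero_add]

lemma OLhi_succ (B L : ℕ) (a : ℕ → ℕ) (m : ℕ) (hm : m < L) :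
    OLhi B L a m = a m + B * OLhi B L a (m+1) := by
  rw [OLhi, OLhi]
  rw [Finset.sum_eq_sum_Ico_succ_bot (by omega : m < L)]
  simp only [Nat.sub_self, pow_zero, mul_one]
  congr 1
  rw [Finset.mul_sum]
  apply Finset.sum_congr rfl
  intro j hj
  rw [Finset.mem_Ico] at hj
  have : B^(j-m) = B * B^(j-(m+1)) := by
    rw [← pow_succ']
    congr 1; omega
  rw [this]; ring

lemma OLdigit_mod (B L : ℕ) (a : ℕ → ℕ) (m : ℕ) (hm : m < L) (h : a m < B) :
    OLhi B L a m % B = a m := by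
  rw [OLhi_succ B L a m hm, Nat.add_mul_mod_self_left, Nat.mod_eq_of_lt h]

/-- Key sandwich: if two keys agree on digits at positions ≥ m and a third key lies
between them, the third key's digit at position m equals theirs. -/
lemma OL_digit_between (B L : ℕ) (hB : 1 ≤ B) (au av aw : ℕ → ℕ)
    (hu : ∀ j, j < L → au j < B) (hv : ∀ j, j < L → av j < B) (hw : ∀ j, j < L → aw j < B)
    (m : ℕ) (hm : m < L)
    (hagree : ∀ j, m ≤ j → j < L → au j = av j)
    (h1 : OLkey B L au ≤ OLkey B L aw) (h2 : OLkey B L aw ≤ OLkey B L av) :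
    aw m = au m := by
  have hiuv : OLhi B L au m = OLhi B L av m := by
    rw [OLhi, OLhi]
    apply Finset.sum_congr rfl
    intro j hj
    rw [Finset.mem_Ico] at hj
    rw [hagree j hj.1 hj.2]
  have hle : m ≤ L := le_of_lt hm
  have d1 : OLhi B L au m ≤ OLhi B L aw m := by
    rw [← OLhi_div B L au hB m hle hu, ← OLhi_div B L aw hB m hle hw]
    exact Nat.div_le_div_right h1
  have d2 : OLhi B L aw m ≤ OLhi B L av m := by
    rw [← OLhi_div B L aw hB m hle hw, ← OLhi_div B L av hB m hle hv]
    exact Nat.div_le_div_right h2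
  have heq : OLhi B L aw m = OLhi B L au m := by omega
  have := OLdigit_mod B L aw m hm (hw m hm)
  rw [← this, heq, OLdigit_mod B L au m hm (hu m hm)]

/-- Keys with equal digits sequences are equal digit-wise: injectivity helper. -/
lemma OL_key_inj_digit (B L : ℕ) (hB : 1 ≤ B) (au av : ℕ → ℕ)
    (hu : ∀ j, j < L → au j < B) (hv : ∀ j, j < L → av j < B)
    (hkey : OLkey B L au = OLkey B L av) (m : ℕ) (hm : m < L) : au m = av m := by
  have h1 : OLhi B L au m = OLhi B L av m := by
    rw [← OLhi_div B L au hB m (le_of_lt hm) hu, ← OLhi_div B L av hB m (le_of_lt hm) hv, hkey]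
  have h2 := OLdigit_mod B L au m hm (hu m hm)
  rw [← h2, h1, OLdigit_mod B L av m hm (hv m hm)]


/-- Minimum distance 1/4 between distinct points. -/
lemma OL_mindist {d : ℕ} {dist : V → V → ℝ} (hm : IsMetric dist) (hs : Spreading d dist)
    (u v : V) (huv : u ≠ v) : (1:ℝ)/4 ≤ dist u v := by
  have h := hs {u, v} u (by simp)
  have hcard : ({u, v} : Finset V).card = 2 := by
    rw [Finset.card_insert_of_notMem (by simpa using huv), Finset.card_singleton]
  rw [hcard] at h
  have hsum : ∑ z ∈ ({u, v} : Finset V), dist u z = dist u v := by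
    rw [Finset.sum_insert (by simpa using huv), Finset.sum_singleton, hm.1 u, zero_add]
  rw [hsum] at h
  have h2 : (((2:ℕ)):ℝ) - 1 = 1 := by norm_num
  rw [h2, Real.one_rpow] at h
  linarith

/-- Ball growth bound from spreading. -/
lemma OL_growth {d : ℕ} (hd : 1 ≤ d) {dist : V → V → ℝ} (hm : IsMetric dist)
    (hs : Spreading d dist) (u : V) (r : ℝ) (hr : 0 ≤ r) (S : Finset V) (huS : u ∈ S)
    (hS : ∀ z ∈ S, dist u z ≤ r) : ((S.card : ℝ) - 1) ≤ (4*r)^d := by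
  have hcpos : 1 ≤ S.card := Finset.card_pos.mpr ⟨u, huS⟩
  set m : ℝ := (S.card : ℝ) - 1 with hmdef
  have hm0 : 0 ≤ m := by
    rw [hmdef]
    have : (1:ℝ) ≤ (S.card : ℝ) := by exact_mod_cast hcpos
    linarith
  rcases eq_or_lt_of_le hm0 with h0 | hpos
  · rw [← h0]; positivity
  -- sum bound
  have hsum : ∑ z ∈ S, dist u z ≤ m * r := by
    have : ∑ z ∈ S, dist u z = ∑ z ∈ S.erase u, dist u z := by
      rw [← Finset.add_sum_erase S _ huS, hm.1 u, zero_add]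
    rw [this]
    calc ∑ z ∈ S.erase u, dist u z ≤ ∑ _z ∈ S.erase u, r :=
          Finset.sum_le_sum (fun z hz => hS z (Finset.mem_of_mem_erase hz))
      _ = ((S.erase u).card : ℝ) * r := by rw [Finset.sum_const, nsmul_eq_mul]
      _ = m * r := by
          rw [Finset.card_erase_of_mem huS, hmdef, Nat.cast_sub hcpos]
          norm_num
  have hspread := hs S u huS
  rw [← hmdef] at hspread
  have hd0 : (d:ℝ) ≠ 0 := by positivity
  have hrpow : m ^ ((1:ℝ) + 1/(d:ℝ)) = m * m ^ ((1:ℝ)/(d:ℝ)) := by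
    rw [Real.rpow_add hpos, Real.rpow_one]
  have key : m * m ^ ((1:ℝ)/(d:ℝ)) ≤ m * (4*r) := by
    calc m * m ^ ((1:ℝ)/(d:ℝ)) = m ^ ((1:ℝ) + 1/(d:ℝ)) := hrpow.symm
      _ ≤ 4 * (m * r) := by linarith [hspread.trans hsum]
      _ = m * (4*r) := by ring
  have hroot : m ^ ((1:ℝ)/(d:ℝ)) ≤ 4*r := le_of_mul_le_mul_left (by linarith [key]) hpos
  have : (m ^ ((1:ℝ)/(d:ℝ)))^d ≤ (4*r)^d := by
    apply pow_le_pow_left₀ (Real.rpow_nonneg hm0 _) hroot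
  calc m = (m ^ ((1:ℝ)/(d:ℝ)))^d := by
        rw [← Real.rpow_natCast (m ^ ((1:ℝ)/(d:ℝ))) d, ← Real.rpow_mul hm0]
        rw [one_div, inv_mul_cancel₀ hd0, Real.rpow_one]
    _ ≤ (4*r)^d := this
/-! ### The clustering construction -/

/-- closed ball as a finset, with the center always included. -/
noncomputable def OLball (dist : V → V → ℝ) (v : V) (r : ℝ) : Finset V :=
  insert v (Finset.univ.filter fun z => dist z v ≤ r)

lemma OLball_nonempty (dist : V → V → ℝ) (v : V) (r : ℝ) : (OLball dist v r).Nonempty :=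
  ⟨v, Finset.mem_insert_self _ _⟩

lemma OLball_mem_iff {dist : V → V → ℝ} (hm : IsMetric dist) {v : V} {r : ℝ} (hr : 0 ≤ r)
    (z : V) : z ∈ OLball dist v r ↔ dist z v ≤ r := by
  rw [OLball, Finset.mem_insert, Finset.mem_filter]
  constructor
  · rintro (rfl | h)
    · rw [hm.1 z]; exact hr
    · exact h.2
  · intro h; right; exact ⟨Finset.mem_univ z, h⟩

/-- The cluster center of `v` at radius `r` under priority `π`. -/
noncomputable def OLcenter {n : ℕ} (dist : V → V → ℝ) (π : V ≃ Fin n) (r : ℝ) (v : V) : V :=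
  OLpmin π (OLball dist v r) (OLball_nonempty dist v r)

lemma OLcenter_dist {n : ℕ} {dist : V → V → ℝ} (hm : IsMetric dist) (π : V ≃ Fin n)
    {r : ℝ} (hr : 0 ≤ r) (v : V) : dist (OLcenter dist π r v) v ≤ r :=
  (OLball_mem_iff hm hr _).mp (OLpmin_mem π _ (OLball_nonempty dist v r))

/-- Small radius: the cluster center is the point itself. -/
lemma OLcenter_small {n d : ℕ} {dist : V → V → ℝ} (hm : IsMetric dist)
    (hs : Spreading d dist) (π : V ≃ Fin n) {r : ℝ} (hr0 : 0 ≤ r) (hr : r < 1/4) (v : V) :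
    OLcenter dist π r v = v := by
  have hmem : dist (OLcenter dist π r v) v ≤ r := OLcenter_dist hm π hr0 v
  by_contra hne
  have := OL_mindist hm hs _ v hne
  linarith

/-- Large radius: all cluster centers coincide. -/
lemma OLcenter_large {n d : ℕ} {dist : V → V → ℝ} (hm : IsMetric dist)
    (hs : Spreading d dist) (π : V ≃ Fin n) {r : ℝ} (hr0 : 0 ≤ r)
    (hr : ∀ z y : V, dist z y ≤ r) (u v : V) :
    OLcenter dist π r u = OLcenter dist π r v := by
  have hBu : ∀ z : V, z ∈ OLball dist u r := fun z => (OLball_mem_iff hm hr0 z).mpr (hr z u)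
  have hBv : ∀ z : V, z ∈ OLball dist v r := fun z => (OLball_mem_iff hm hr0 z).mpr (hr z v)
  apply π.injective
  exact le_antisymm (OLpmin_le π _ _ _ (hBu _)) (OLpmin_le π _ _ _ (hBv _))

/-- Witness lemma: if two points get different centers at radius r, there is a witness
`w` whose min-distance straddles `r` and which is π-minimal among closer points. -/
lemma OL_witness {n d : ℕ} {dist : V → V → ℝ} (hm : IsMetric dist)
    (hs : Spreading d dist) (π : V ≃ Fin n) {r : ℝ} (hr0 : 0 ≤ r) (u v : V)
    (hne : OLcenter dist π r u ≠ OLcenter dist π r v) :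
    ∃ w : V, min (dist w u) (dist w v) ≤ r ∧ r < max (dist w u) (dist w v) ∧
      ∀ z : V, min (dist z u) (dist z v) ≤ min (dist w u) (dist w v) → z ≠ w → π w < π z := by
  set Bu := OLball dist u r
  set Bv := OLball dist v r
  have hUne : (Bu ∪ Bv).Nonempty := (OLball_nonempty dist u r).mono Finset.subset_union_left
  set w := OLpmin π (Bu ∪ Bv) hUne with hw
  have hwmem := OLpmin_mem π (Bu ∪ Bv) hUne
  rw [Finset.mem_union] at hwmem
  have hnotboth : ¬ (w ∈ Bu ∧ w ∈ Bv) := by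
    rintro ⟨h1, h2⟩
    have e1 : OLpmin π Bu (OLball_nonempty dist u r) = w :=
      OLpmin_subset π Bu (Bu ∪ Bv) _ hUne Finset.subset_union_left h1
    have e2 : OLpmin π Bv (OLball_nonempty dist v r) = w :=
      OLpmin_subset π Bv (Bu ∪ Bv) _ hUne Finset.subset_union_right h2
    exact hne (by rw [OLcenter, OLcenter, e1, e2])
  have hmem_iff_u := fun z => OLball_mem_iff hm (v := u) hr0 z
  have hmem_iff_v := fun z => OLball_mem_iff hm (v := v) hr0 z
  have hior : (dist w u ≤ r ∧ ¬ dist w v ≤ r) ∨ (dist w v ≤ r ∧ ¬ dist w u ≤ r) := by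
    rcases hwmem with h | h
    · left
      refine ⟨(hmem_iff_u w).mp h, fun hc => hnotboth ⟨h, (hmem_iff_v w).mpr hc⟩⟩
    · right
      refine ⟨(hmem_iff_v w).mp h, fun hc => hnotboth ⟨(hmem_iff_u w).mpr hc, h⟩⟩
  refine ⟨w, ?_, ?_, ?_⟩
  · rcases hior with ⟨h1, _⟩ | ⟨h1, _⟩
    · exact le_trans (min_le_left _ _) h1
    · exact le_trans (min_le_right _ _) h1
  · rcases hior with ⟨_, h2⟩ | ⟨_, h2⟩
    · exact lt_of_lt_of_le (lt_of_not_ge h2) (le_max_right _ _)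
    · exact lt_of_lt_of_le (lt_of_not_ge h2) (le_max_left _ _)
  · intro z hz hzw
    have hminw : min (dist w u) (dist w v) ≤ r := by
      rcases hior with ⟨h1, _⟩ | ⟨h1, _⟩
      · exact le_trans (min_le_left _ _) h1
      · exact le_trans (min_le_right _ _) h1
    have hzr : min (dist z u) (dist z v) ≤ r := le_trans hz hminw
    have hzmem : z ∈ Bu ∪ Bv := by
      rw [Finset.mem_union, hmem_iff_u, hmem_iff_v]
      rcases le_or_gt (dist z u) (dist z v) with h | h
      · left; rwa [min_eq_left h] at hzr
      · right; rwa [min_eq_right (le_of_lt h)] at hzr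
    exact OLpmin_lt π (Bu ∪ Bv) hUne z hzmem hzw
/-! ### codes, keys and ranks -/

noncomputable def OLrho (M : ℕ) (m : Fin M) (j : ℕ) : ℝ := ((M:ℝ) + m) * 2^j / (8*M)

lemma OLrho_lb (M : ℕ) (hM : 0 < M) (m : Fin M) (j : ℕ) : (2:ℝ)^j/8 ≤ OLrho M m j := by
  rw [OLrho]
  rw [div_le_div_iff₀ (by norm_num) (by positivity)]
  have hm0 : (0:ℝ) ≤ (m:ℝ) := Nat.cast_nonneg _
  have h2 : (0:ℝ) < 2^j := by positivity
  nlinarith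

lemma OLrho_nonneg (M : ℕ) (hM : 0 < M) (m : Fin M) (j : ℕ) : 0 ≤ OLrho M m j :=
  le_trans (by positivity) (OLrho_lb M hM m j)

lemma OLrho_ub (M : ℕ) (hM : 0 < M) (m : Fin M) (j : ℕ) : OLrho M m j < (2:ℝ)^j/4 := by
  rw [OLrho]
  rw [div_lt_div_iff₀ (by positivity) (by norm_num)]
  have hm : (m:ℝ) < M := by exact_mod_cast m.is_lt
  have h2 : (0:ℝ) < 2^j := by positivity
  have hM0 : (0:ℝ) < M := by exact_mod_cast hM
  nlinarith

lemma OLrho_le_iff (M : ℕ) (hM : 0 < M) (m : Fin M) (j : ℕ) (c : ℝ) :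
    c ≤ OLrho M m j ↔ 8*M*c/2^j - M ≤ (m:ℝ) := by
  have hM0 : (0:ℝ) < M := by exact_mod_cast hM
  have h2 : (0:ℝ) < 2^j := by positivity
  rw [OLrho, le_div_iff₀ (by positivity), sub_le_iff_le_add, div_le_iff₀ h2]
  constructor <;> intro h <;> nlinarith

lemma OLrho_lt_iff (M : ℕ) (hM : 0 < M) (m : Fin M) (j : ℕ) (c : ℝ) :
    OLrho M m j < c ↔ (m:ℝ) < 8*M*c/2^j - M := by
  have hM0 : (0:ℝ) < M := by exact_mod_cast hM
  have h2 : (0:ℝ) < 2^j := by positivity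
  rw [OLrho, div_lt_iff₀ (by positivity), lt_sub_iff_add_lt, lt_div_iff₀ h2]
  constructor <;> intro h <;> nlinarith

variable {V : Type} [Fintype V] [DecidableEq V]

noncomputable def OLcode (dist : V → V → ℝ) (e π : V ≃ Fin (Fintype.card V)) (v₀ : V)
    (r : ℝ) (v : V) : ℕ :=
  if OLcenter dist π r v = OLcenter dist π r v₀ then 0 else (e (OLcenter dist π r v)).val + 1

lemma OLcode_lt (dist : V → V → ℝ) (e π : V ≃ Fin (Fintype.card V)) (v₀ : V)
    (r : ℝ) (v : V) : OLcode dist e π v₀ r v < Fintype.card V + 1 := by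
  rw [OLcode]
  split
  · omega
  · have := (e (OLcenter dist π r v)).is_lt; omega

lemma OLcode_center (dist : V → V → ℝ) (e π : V ≃ Fin (Fintype.card V)) (v₀ : V)
    (r : ℝ) (x y : V) (h : OLcode dist e π v₀ r x = OLcode dist e π v₀ r y) :
    OLcenter dist π r x = OLcenter dist π r y := by
  by_cases h1 : OLcenter dist π r x = OLcenter dist π r v₀ <;>
    by_cases h2 : OLcenter dist π r y = OLcenter dist π r v₀
  · rw [h1, h2]
  · rw [OLcode, OLcode, if_pos h1, if_neg h2] at h; omega
  · rw [OLcode, OLcode, if_neg h1, if_pos h2] at h; omega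
  · rw [OLcode, OLcode, if_neg h1, if_neg h2] at h
    exact e.injective (Fin.ext (by omega))

noncomputable def OLkeyV (dist : V → V → ℝ) (e π : V ≃ Fin (Fintype.card V)) (v₀ : V)
    (M : ℕ) (m : Fin M) (L : ℕ) (v : V) : ℕ :=
  OLkey (Fintype.card V + 1) L (fun j => OLcode dist e π v₀ (OLrho M m j) v)

noncomputable def OLq (dist : V → V → ℝ) (e π : V ≃ Fin (Fintype.card V)) (v₀ : V)
    (M : ℕ) (m : Fin M) (L : ℕ) (v : V) : ℕ :=
  (Finset.univ.filter fun z => OLkeyV dist e π v₀ M m L z < OLkeyV dist e π v₀ M m L v).card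

variable {d : ℕ} {dist : V → V → ℝ}

lemma OLkey_v₀ (e π : V ≃ Fin (Fintype.card V)) (v₀ : V) {M : ℕ} (m : Fin M) (L : ℕ) :
    OLkeyV dist e π v₀ M m L v₀ = 0 := by
  rw [OLkeyV, OLkey]
  apply Finset.sum_eq_zero
  intro j _
  rw [OLcode, if_pos rfl, zero_mul]

lemma OLcode_zero (hm : IsMetric dist) (hs : Spreading d dist)
    (e π : V ≃ Fin (Fintype.card V)) (v₀ : V) {M : ℕ} (hM : 0 < M) (m : Fin M) (x : V) :
    OLcode dist e π v₀ (OLrho M m 0) x = if x = v₀ then 0 else (e x).val + 1 := by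
  have hsmall : ∀ y : V, OLcenter dist π (OLrho M m 0) y = y := by
    intro y
    apply OLcenter_small hm hs π (OLrho_nonneg M hM m 0) _ y
    have := OLrho_ub M hM m 0
    norm_num at this ⊢
    linarith
  rw [OLcode, hsmall x, hsmall v₀]

lemma OLkeyV_inj (hm : IsMetric dist) (hs : Spreading d dist)
    (e π : V ≃ Fin (Fintype.card V)) (v₀ : V) {M : ℕ} (hM : 0 < M) (m : Fin M)
    {L : ℕ} (hL : 1 ≤ L) (x y : V)
    (h : OLkeyV dist e π v₀ M m L x = OLkeyV dist e π v₀ M m L y) :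
    x = y := by
  have hdig := OL_key_inj_digit (Fintype.card V + 1) L (by omega) _ _
    (fun j _ => OLcode_lt dist e π v₀ _ x) (fun j _ => OLcode_lt dist e π v₀ _ y)
    h 0 (by omega)
  rw [OLcode_zero hm hs e π v₀ hM m x, OLcode_zero hm hs e π v₀ hM m y] at hdig
  by_cases h1 : x = v₀ <;> by_cases h2 : y = v₀
  · rw [h1, h2]
  · rw [if_pos h1, if_neg h2] at hdig; omega
  · rw [if_neg h1, if_pos h2] at hdig; omega
  · rw [if_neg h1, if_neg h2] at hdig
    exact e.injective (Fin.ext (by omega))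

lemma OLq_v₀ (e π : V ≃ Fin (Fintype.card V)) (v₀ : V) {M : ℕ} (m : Fin M) (L : ℕ) :
    OLq dist e π v₀ M m L v₀ = 0 := by
  rw [OLq]
  convert Finset.card_empty
  rw [Finset.filter_eq_empty_iff]
  intro z _
  rw [OLkey_v₀]
  omega

lemma OLq_lt_card (e π : V ≃ Fin (Fintype.card V)) (v₀ : V) {M : ℕ} (m : Fin M) (L : ℕ)
    (v : V) : OLq dist e π v₀ M m L v < Fintype.card V := by
  rw [OLq]
  have hsub : (Finset.univ.filter fun z => OLkeyV dist e π v₀ M m L z < OLkeyV dist e π v₀ M m L v)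
      ⊆ Finset.univ.erase v := by
    intro z hz
    rw [Finset.mem_filter] at hz
    rw [Finset.mem_erase]
    refine ⟨fun hzv => ?_, Finset.mem_univ z⟩
    subst hzv
    exact lt_irrefl _ hz.2
  calc _ ≤ (Finset.univ.erase v).card := Finset.card_le_card hsub
    _ < Finset.univ.card := Finset.card_erase_lt_of_mem (Finset.mem_univ v)
    _ = Fintype.card V := Finset.card_univ

lemma OLq_strictmono (e π : V ≃ Fin (Fintype.card V)) (v₀ : V) {M : ℕ} (m : Fin M) (L : ℕ)
    (x y : V) (h : OLkeyV dist e π v₀ M m L x < OLkeyV dist e π v₀ M m L y) :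
    OLq dist e π v₀ M m L x < OLq dist e π v₀ M m L y := by
  rw [OLq, OLq]
  apply Finset.card_lt_card
  have hsub : (Finset.univ.filter fun z => OLkeyV dist e π v₀ M m L z < OLkeyV dist e π v₀ M m L x)
      ⊆ (Finset.univ.filter fun z => OLkeyV dist e π v₀ M m L z < OLkeyV dist e π v₀ M m L y) := by
    intro z hz
    rw [Finset.mem_filter] at hz ⊢
    exact ⟨hz.1, lt_trans hz.2 h⟩
  refine (Finset.ssubset_iff_of_subset hsub).mpr ?_
  exact ⟨x, Finset.mem_filter.mpr ⟨Finset.mem_univ x, h⟩,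
    fun hc => lt_irrefl _ (Finset.mem_filter.mp hc).2⟩

lemma OLq_inj (hm : IsMetric dist) (hs : Spreading d dist)
    (e π : V ≃ Fin (Fintype.card V)) (v₀ : V) {M : ℕ} (hM : 0 < M) (m : Fin M)
    {L : ℕ} (hL : 1 ≤ L) : Function.Injective (OLq dist e π v₀ M m L) := by
  intro x y h
  rcases lt_trichotomy (OLkeyV dist e π v₀ M m L x) (OLkeyV dist e π v₀ M m L y) with hk | hk | hk
  · exact absurd h (Nat.ne_of_lt (OLq_strictmono e π v₀ m L x y hk))
  · exact OLkeyV_inj hm hs e π v₀ hM m hL x y hk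
  · exact absurd h.symm (Nat.ne_of_lt (OLq_strictmono e π v₀ m L y x hk))
lemma OL_peromega_core (hd : 1 ≤ d) (hm : IsMetric dist) (hs : Spreading d dist)
    (v₀ : V) (e π : V ≃ Fin (Fintype.card V)) {M : ℕ} (hM : 0 < M) (m : Fin M)
    {L : ℕ} (hL : 1 ≤ L) (hD : ∀ z y : V, dist z y ≤ (2:ℝ)^(L-1)/8)
    (u v : V)
    (hkey : OLkeyV dist e π v₀ M m L u < OLkeyV dist e π v₀ M m L v) :
    |(OLq dist e π v₀ M m L u : ℝ) - (OLq dist e π v₀ M m L v : ℝ)| ^ ((1:ℝ)/(d:ℝ))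
      ≤ 8 * ∑ j ∈ Finset.range L, (2:ℝ)^j *
          (if OLcenter dist π (OLrho M m j) u ≠ OLcenter dist π (OLrho M m j) v
            then 1 else 0) := by
  have huv : u ≠ v := by rintro rfl; exact lt_irrefl _ hkey
  set K : V → ℕ := OLkeyV dist e π v₀ M m L with hK
  set cd : V → ℕ → ℕ := fun x j => OLcode dist e π v₀ (OLrho M m j) x with hcd
  -- the set of differing levels
  set df : Finset ℕ := (Finset.range L).filter (fun j => cd u j ≠ cd v j) with hdf
  have hdf0 : (0:ℕ) ∈ df := by
    rw [hdf, Finset.mem_filter, Finset.mem_range]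
    refine ⟨by omega, ?_⟩
    rw [hcd]
    simp only
    rw [OLcode_zero hm hs e π v₀ hM m u, OLcode_zero hm hs e π v₀ hM m v]
    by_cases h1 : u = v₀ <;> by_cases h2 : v = v₀
    · exact absurd (h1.trans h2.symm) huv
    · rw [if_pos h1, if_neg h2]; omega
    · rw [if_neg h1, if_pos h2]; omega
    · rw [if_neg h1, if_neg h2]
      intro hcon
      exact huv (e.injective (Fin.ext (by omega)))
  have hdfne : df.Nonempty := ⟨0, hdf0⟩
  set i : ℕ := df.max' hdfne with hi
  have hidf : i ∈ df := Finset.max'_mem df hdfne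
  have hiL : i < L := by
    have := hidf; rw [hdf, Finset.mem_filter, Finset.mem_range] at this; exact this.1
  have hine : cd u i ≠ cd v i := by
    have := hidf; rw [hdf, Finset.mem_filter] at this; exact this.2
  have hagree : ∀ j, i + 1 ≤ j → j < L → cd u j = cd v j := by
    intro j hj1 hj2
    by_contra hne
    have : j ∈ df := by rw [hdf, Finset.mem_filter, Finset.mem_range]; exact ⟨hj2, hne⟩
    have := Finset.le_max' df j this
    omega
  -- top level agreement
  have htop : cd u (L-1) = cd v (L-1) := by
    rw [hcd]
    simp only
    rw [OLcode, OLcode]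
    have hcent : ∀ x y : V, OLcenter dist π (OLrho M m (L-1)) x
        = OLcenter dist π (OLrho M m (L-1)) y := by
      intro x y
      apply OLcenter_large hm hs π (OLrho_nonneg M hM m _)
      intro z z'
      exact le_trans (hD z z') (OLrho_lb M hM m _)
    rw [hcent u v₀, hcent v v₀]
  have hiL1 : i + 1 < L := by
    rcases Nat.lt_or_ge (i+1) L with h | h
    · exact h
    · exfalso
      have : i = L - 1 := by omega
      rw [this] at hine
      exact hine htop
  -- the between set
  set T : Finset V := Finset.univ.filter (fun z => K u ≤ K z ∧ K z < K v) with hT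
  have hsplit : OLq dist e π v₀ M m L v = OLq dist e π v₀ M m L u + T.card := by
    rw [OLq, OLq]
    rw [← Finset.card_union_of_disjoint]
    · congr 1
      apply Finset.ext
      intro z
      simp only [Finset.mem_union, Finset.mem_filter, Finset.mem_univ, true_and, hT]
      constructor
      · intro h
        rcases le_or_gt (K u) (K z) with h2 | h2
        · right; exact ⟨h2, h⟩
        · left; exact h2
      · rintro (h | ⟨h1, h2⟩)
        · exact lt_trans h hkey
        · exact h2
    · rw [Finset.disjoint_left]
      intro z hz1 hz2
      rw [Finset.mem_filter] at hz1
      rw [hT, Finset.mem_filter] at hz2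
      exact absurd hz1.2 (not_lt_of_ge hz2.2.1)
  -- T is inside a small ball
  have hTsub : T ⊆ Finset.univ.filter (fun z => dist z u ≤ (2:ℝ)^i) := by
    intro z hz
    rw [hT, Finset.mem_filter] at hz
    obtain ⟨-, hz1, hz2⟩ := hz
    rw [Finset.mem_filter]
    refine ⟨Finset.mem_univ z, ?_⟩
    have hdig : cd z (i+1) = cd u (i+1) := by
      apply OL_digit_between (Fintype.card V + 1) L (by omega)
        (fun j => cd u j) (fun j => cd v j) (fun j => cd z j)
        (fun j _ => OLcode_lt dist e π v₀ _ u) (fun j _ => OLcode_lt dist e π v₀ _ v)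
        (fun j _ => OLcode_lt dist e π v₀ _ z) (i+1) hiL1
        (fun j hj1 hj2 => hagree j hj1 hj2) hz1 (le_of_lt hz2)
    have hcent : OLcenter dist π (OLrho M m (i+1)) z = OLcenter dist π (OLrho M m (i+1)) u :=
      OLcode_center dist e π v₀ _ z u hdig
    have h1 : dist (OLcenter dist π (OLrho M m (i+1)) z) z ≤ OLrho M m (i+1) :=
      OLcenter_dist hm π (OLrho_nonneg M hM m _) z
    have h2 : dist (OLcenter dist π (OLrho M m (i+1)) u) u ≤ OLrho M m (i+1) :=
      OLcenter_dist hm π (OLrho_nonneg M hM m _) u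
    rw [hcent] at h1
    have htri : dist z u ≤ dist z (OLcenter dist π (OLrho M m (i+1)) u)
        + dist (OLcenter dist π (OLrho M m (i+1)) u) u := hm.2.2.2.1 _ _ _
    have hsymm : dist z (OLcenter dist π (OLrho M m (i+1)) u)
        = dist (OLcenter dist π (OLrho M m (i+1)) u) z := hm.2.2.1 _ _
    have hrho : OLrho M m (i+1) < (2:ℝ)^(i+1)/4 := OLrho_ub M hM m _
    have h2pow : (2:ℝ)^(i+1)/4 = 2^i/2 := by
      rw [pow_succ]; ring
    linarith
  -- cardinality bound via growth
  have hTcard : (T.card : ℝ) ≤ (8 * 2^i)^d := by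
    have hball := OL_growth hd hm hs u ((2:ℝ)^i) (by positivity)
      (Finset.univ.filter (fun z => dist z u ≤ (2:ℝ)^i))
      (by rw [Finset.mem_filter]; exact ⟨Finset.mem_univ u, by rw [hm.1 u]; positivity⟩)
      (by intro z hz
          rw [Finset.mem_filter] at hz
          rw [hm.2.2.1]
          exact hz.2)
    have hc1 : (T.card : ℝ) ≤ ((Finset.univ.filter (fun z => dist z u ≤ (2:ℝ)^i)).card : ℝ) := by
      exact_mod_cast Finset.card_le_card hTsub
    have hone : (1:ℝ) ≤ (4 * 2^i)^d := by
      have h2i : (2:ℝ)^0 ≤ 2^i := pow_le_pow_right₀ (by norm_num) (Nat.zero_le i)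
      have hbase : (1:ℝ) ≤ 4 * 2^i := by norm_num at h2i; nlinarith
      calc (1:ℝ) = 1^d := (one_pow d).symm
        _ ≤ (4 * 2^i)^d := pow_le_pow_left₀ (by norm_num) hbase d
    have h2d : (2:ℝ) ≤ 2^d := by
      calc (2:ℝ) = 2^1 := (pow_one 2).symm
        _ ≤ 2^d := by apply pow_le_pow_right₀ (by norm_num) hd
    have : (8:ℝ) * 2^i = 2 * (4 * 2^i) := by ring
    rw [this, mul_pow]
    nlinarith [hball, hc1, hone, h2d, pow_nonneg (by positivity : (0:ℝ) ≤ 4 * 2^i) d]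
  -- convert to rpow
  have habs : |(OLq dist e π v₀ M m L u : ℝ) - (OLq dist e π v₀ M m L v : ℝ)| = (T.card : ℝ) := by
    rw [abs_sub_comm, abs_of_nonneg]
    · rw [hsplit]; push_cast; ring
    · rw [hsplit]; push_cast; linarith
  rw [habs]
  have hd0 : (d:ℝ) ≠ 0 := by positivity
  have hstep : (T.card : ℝ) ^ ((1:ℝ)/(d:ℝ)) ≤ 8 * 2^i := by
    calc (T.card : ℝ) ^ ((1:ℝ)/(d:ℝ)) ≤ ((8 * 2^i)^d) ^ ((1:ℝ)/(d:ℝ)) := by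
          apply Real.rpow_le_rpow (Nat.cast_nonneg _) hTcard (by positivity)
      _ = 8 * 2^i := by
          rw [← Real.rpow_natCast ((8:ℝ) * 2^i) d, ← Real.rpow_mul (by positivity)]
          rw [mul_one_div_cancel hd0, Real.rpow_one]
  apply le_trans hstep
  have hind : (2:ℝ)^i ≤ ∑ j ∈ Finset.range L, (2:ℝ)^j *
      (if OLcenter dist π (OLrho M m j) u ≠ OLcenter dist π (OLrho M m j) v
        then 1 else 0) := by
    have hne : OLcenter dist π (OLrho M m i) u ≠ OLcenter dist π (OLrho M m i) v := by
      intro hceq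
      apply hine
      rw [hcd]
      simp only
      rw [OLcode, OLcode, hceq]
    have := Finset.single_le_sum (f := fun j => (2:ℝ)^j *
      (if OLcenter dist π (OLrho M m j) u ≠ OLcenter dist π (OLrho M m j) v then 1 else 0))
      (fun j _ => by positivity) (Finset.mem_range.mpr hiL)
    simp only [if_pos hne, mul_one] at this
    exact this
  linarith
lemma OL_peromega (hd : 1 ≤ d) (hm : IsMetric dist) (hs : Spreading d dist)
    (v₀ : V) (e π : V ≃ Fin (Fintype.card V)) {M : ℕ} (hM : 0 < M) (m : Fin M)
    {L : ℕ} (hL : 1 ≤ L) (hD : ∀ z y : V, dist z y ≤ (2:ℝ)^(L-1)/8) (u v : V) :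
    |(OLq dist e π v₀ M m L u : ℝ) - (OLq dist e π v₀ M m L v : ℝ)| ^ ((1:ℝ)/(d:ℝ))
      ≤ 8 * ∑ j ∈ Finset.range L, (2:ℝ)^j *
          (if OLcenter dist π (OLrho M m j) u ≠ OLcenter dist π (OLrho M m j) v
            then 1 else 0) := by
  rcases eq_or_ne u v with rfl | huv
  · have hd0 : (1:ℝ)/(d:ℝ) ≠ 0 := by positivity
    rw [sub_self, abs_zero, Real.zero_rpow hd0]
    apply mul_nonneg (by norm_num)
    apply Finset.sum_nonneg
    intro j _
    positivity
  rcases lt_trichotomy (OLkeyV dist e π v₀ M m L u) (OLkeyV dist e π v₀ M m L v) with hk | hk | hk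
  · exact OL_peromega_core hd hm hs v₀ e π hM m hL hD u v hk
  · exact absurd (OLkeyV_inj hm hs e π v₀ hM m hL u v hk) huv
  · have hsum : ∑ j ∈ Finset.range L, (2:ℝ)^j *
        (if OLcenter dist π (OLrho M m j) u ≠ OLcenter dist π (OLrho M m j) v then 1 else 0)
        = ∑ j ∈ Finset.range L, (2:ℝ)^j *
        (if OLcenter dist π (OLrho M m j) v ≠ OLcenter dist π (OLrho M m j) u then 1 else 0) := by
      apply Finset.sum_congr rfl
      intro j _
      congr 1
      by_cases h : OLcenter dist π (OLrho M m j) u = OLcenter dist π (OLrho M m j) v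
      · rw [if_neg (by simp [h]), if_neg (by simp [h.symm])]
      · rw [if_pos h, if_pos (Ne.symm h)]
    rw [abs_sub_comm, hsum]
    exact OL_peromega_core hd hm hs v₀ e π hM m hL hD v u hk

lemma OL_cnt (hm : IsMetric dist) (hs : Spreading d dist)
    (u v : V) (j : ℕ) {M : ℕ} (hM : 0 < M) :
    ((Finset.univ.filter fun ω : (V ≃ Fin (Fintype.card V)) × Fin M =>
        OLcenter dist ω.1 (OLrho M ω.2 j) u ≠ OLcenter dist ω.1 (OLrho M ω.2 j) v).card : ℝ)
      ≤ ∑ w : V,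
          ((Finset.univ.filter fun π : V ≃ Fin (Fintype.card V) => ∀ z : V,
             min (dist z u) (dist z v) ≤ min (dist w u) (dist w v) → z ≠ w → π w < π z).card : ℝ)
        * ((Finset.univ.filter fun m : Fin M =>
             min (dist w u) (dist w v) ≤ OLrho M m j
               ∧ OLrho M m j < max (dist w u) (dist w v)).card : ℝ) := by
  have hsub : (Finset.univ.filter fun ω : (V ≃ Fin (Fintype.card V)) × Fin M =>
      OLcenter dist ω.1 (OLrho M ω.2 j) u ≠ OLcenter dist ω.1 (OLrho M ω.2 j) v)
      ⊆ Finset.univ.biUnion (fun w : V =>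
        (Finset.univ.filter fun π : V ≃ Fin (Fintype.card V) => ∀ z : V,
           min (dist z u) (dist z v) ≤ min (dist w u) (dist w v) → z ≠ w → π w < π z) ×ˢ
        (Finset.univ.filter fun m : Fin M =>
           min (dist w u) (dist w v) ≤ OLrho M m j
             ∧ OLrho M m j < max (dist w u) (dist w v))) := by
    rintro ⟨π, m⟩ hω
    rw [Finset.mem_filter] at hω
    obtain ⟨-, hne⟩ := hω
    obtain ⟨w, hw1, hw2, hw3⟩ := OL_witness hm hs π (OLrho_nonneg M hM m j) u v hne
    rw [Finset.mem_biUnion]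
    refine ⟨w, Finset.mem_univ w, ?_⟩
    rw [Finset.mem_product]
    constructor
    · rw [Finset.mem_filter]
      exact ⟨Finset.mem_univ π, hw3⟩
    · rw [Finset.mem_filter]
      exact ⟨Finset.mem_univ m, hw1, hw2⟩
  calc ((Finset.univ.filter fun ω : (V ≃ Fin (Fintype.card V)) × Fin M =>
        OLcenter dist ω.1 (OLrho M ω.2 j) u ≠ OLcenter dist ω.1 (OLrho M ω.2 j) v).card : ℝ)
      ≤ ((Finset.univ.biUnion fun w : V =>
        (Finset.univ.filter fun π : V ≃ Fin (Fintype.card V) => ∀ z : V,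
           min (dist z u) (dist z v) ≤ min (dist w u) (dist w v) → z ≠ w → π w < π z) ×ˢ
        (Finset.univ.filter fun m : Fin M =>
           min (dist w u) (dist w v) ≤ OLrho M m j
             ∧ OLrho M m j < max (dist w u) (dist w v))).card : ℝ) := by
        exact_mod_cast Finset.card_le_card hsub
    _ ≤ _ := by
        have := Finset.card_biUnion_le (s := (Finset.univ : Finset V))
          (t := fun w : V =>
            (Finset.univ.filter fun π : V ≃ Fin (Fintype.card V) => ∀ z : V,
               min (dist z u) (dist z v) ≤ min (dist w u) (dist w v) → z ≠ w → π w < π z) ×ˢ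
            (Finset.univ.filter fun m : Fin M =>
               min (dist w u) (dist w v) ≤ OLrho M m j
                 ∧ OLrho M m j < max (dist w u) (dist w v)))
        calc ((Finset.univ.biUnion _).card : ℝ) ≤ ((∑ w : V, ((Finset.univ.filter fun π : V ≃ Fin (Fintype.card V) => ∀ z : V,
               min (dist z u) (dist z v) ≤ min (dist w u) (dist w v) → z ≠ w → π w < π z) ×ˢ
            (Finset.univ.filter fun m : Fin M =>
               min (dist w u) (dist w v) ≤ OLrho M m j
                 ∧ OLrho M m j < max (dist w u) (dist w v))).card : ℕ) : ℝ) := by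
              exact_mod_cast this
          _ = _ := by
              push_cast
              apply Finset.sum_congr rfl
              intro w _
              rw [Finset.card_product]
              push_cast
              ring
lemma OL_inner (hm : IsMetric dist) {L : ℕ} (u v w : V)
    (ht14 : (1:ℝ)/4 ≤ dist u v) :
    ∑ j ∈ (Finset.range L).filter (fun j => ¬((2:ℝ)^j ≤ 2*dist u v)),
      (2:ℝ)^j * ((Finset.univ.filter fun m : Fin (16*2^L) =>
        min (dist w u) (dist w v) ≤ OLrho (16*2^L) m j
          ∧ OLrho (16*2^L) m j < max (dist w u) (dist w v)).card : ℝ)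
      ≤ 27 * ((16*2^L : ℕ):ℝ) * dist u v := by
  set M : ℕ := 16*2^L with hMdef
  have hM : 0 < M := by positivity
  have hMcast : (M:ℝ) = 16 * 2^L := by rw [hMdef]; push_cast; ring
  set t : ℝ := dist u v with htdef
  have ht0 : (0:ℝ) < t := by linarith
  set mn : ℝ := min (dist w u) (dist w v) with hmn
  set mx : ℝ := max (dist w u) (dist w v) with hmx
  have hmn0 : 0 ≤ mn := le_min (hm.2.1 w u) (hm.2.1 w v)
  have hmnmx : mn ≤ mx := min_le_max
  have hmxmn : mx ≤ mn + t := by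
    have h1 : dist w v ≤ dist w u + t := by
      have := hm.2.2.2.1 w u v; rw [htdef]; linarith
    have h2 : dist w u ≤ dist w v + t := by
      have h3 := hm.2.2.2.1 w v u
      have h4 : dist v u = t := by rw [htdef]; exact hm.2.2.1 v u
      linarith
    rw [hmx, hmn]
    rcases min_choice (dist w u) (dist w v) with h | h <;> rw [h] <;>
      rcases max_choice (dist w u) (dist w v) with h' | h' <;> rw [h'] <;> linarith
  set A : ℝ := max (4*mn) (2*t) with hA
  have hA0 : 0 < A := lt_of_lt_of_le (by linarith) (le_max_right _ _)
  set f : ℕ → ℝ := fun j => (2:ℝ)^j * ((Finset.univ.filter fun m : Fin M =>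
      mn ≤ OLrho M m j ∧ OLrho M m j < mx).card : ℝ) with hf
  set hS : Finset ℕ := (Finset.range L).filter (fun j => ¬((2:ℝ)^j ≤ 2*t)) with hhS
  set nzS : Finset ℕ := hS.filter (fun j => f j ≠ 0) with hnzS
  have hsum_eq : ∑ j ∈ hS, f j = ∑ j ∈ nzS, f j := by
    rw [hnzS]
    exact (Finset.sum_filter_of_ne (fun x _ h => h)).symm
  have hwin : ∀ j ∈ nzS, A < 2^j ∧ (2:ℝ)^j < 8*A := by
    intro j hj
    rw [hnzS, Finset.mem_filter, hhS, Finset.mem_filter, Finset.mem_range] at hj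
    obtain ⟨⟨hjL, hjhi⟩, hjne⟩ := hj
    push_neg at hjhi
    have hcard_ne : (Finset.univ.filter fun m : Fin M =>
        mn ≤ OLrho M m j ∧ OLrho M m j < mx).card ≠ 0 := by
      intro h0
      apply hjne
      rw [hf]
      simp only
      rw [h0]
      norm_num
    obtain ⟨m, hmem⟩ := Finset.card_pos.mp (Nat.pos_of_ne_zero hcard_ne)
    rw [Finset.mem_filter] at hmem
    obtain ⟨-, hm1, hm2⟩ := hmem
    have hub := OLrho_ub M hM m j
    have hlb := OLrho_lb M hM m j
    constructor
    · rw [hA]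
      apply max_lt <;> linarith
    · have h8 : (2:ℝ)^j < 8*mn + 8*t := by linarith
      have hA1 : 4*mn ≤ A := le_max_left _ _
      have hA2 : 2*t ≤ A := le_max_right _ _
      linarith
  have hcard3 : nzS.card ≤ 3 := OL_dyadic nzS A hA0 hwin
  have hfb : ∀ j ∈ nzS, f j ≤ 9*(M:ℝ)*t := by
    intro j hj
    rw [hnzS, Finset.mem_filter, hhS, Finset.mem_filter, Finset.mem_range] at hj
    obtain ⟨⟨hjL, -⟩, -⟩ := hj
    have h2j : (0:ℝ) < 2^j := by positivity
    have hM0 : (0:ℝ) ≤ (M:ℝ) := Nat.cast_nonneg _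
    have hfe : (Finset.univ.filter fun m : Fin M =>
          mn ≤ OLrho M m j ∧ OLrho M m j < mx)
        = (Finset.univ.filter fun m : Fin M =>
          (8*(M:ℝ)*mn/2^j - M ≤ (m:ℝ)) ∧ ((m:ℝ) < 8*(M:ℝ)*mx/2^j - M)) := by
      apply Finset.filter_congr
      intro m _
      rw [OLrho_le_iff M hM m j mn, OLrho_lt_iff M hM m j mx]
    have hxy : 8*(M:ℝ)*mn/2^j - M ≤ 8*(M:ℝ)*mx/2^j - M := by
      have hnum : 8*(M:ℝ)*mn ≤ 8*(M:ℝ)*mx := by nlinarith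
      have := (div_le_div_iff_of_pos_right h2j).mpr hnum
      linarith
    have hcm : ((Finset.univ.filter fun m : Fin M =>
        mn ≤ OLrho M m j ∧ OLrho M m j < mx).card : ℝ)
        ≤ (8*(M:ℝ)*mx/2^j - M) - (8*(M:ℝ)*mn/2^j - M) + 1 := by
      rw [hfe]
      exact OL_intcount M _ _ hxy
    have hfj : f j ≤ 8*(M:ℝ)*(mx-mn) + 2^j := by
      rw [hf]
      simp only
      calc (2:ℝ)^j * ((Finset.univ.filter fun m : Fin M =>
            mn ≤ OLrho M m j ∧ OLrho M m j < mx).card : ℝ)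
          ≤ 2^j * ((8*(M:ℝ)*mx/2^j - M) - (8*(M:ℝ)*mn/2^j - M) + 1) := by
            exact mul_le_mul_of_nonneg_left hcm (le_of_lt h2j)
        _ = 8*(M:ℝ)*(mx-mn) + 2^j := by
            field_simp
            ring
    have h2L : (2:ℝ)^j ≤ 2^L := pow_le_pow_right₀ (by norm_num) (le_of_lt hjL)
    have hML : (2:ℝ)^L = (M:ℝ)/16 := by rw [hMcast]; ring
    have hmxmnt : mx - mn ≤ t := by linarith
    nlinarith
  calc ∑ j ∈ hS, f j = ∑ j ∈ nzS, f j := hsum_eq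
    _ ≤ nzS.card • (9*(M:ℝ)*t) := Finset.sum_le_card_nsmul _ _ _ hfb
    _ = (nzS.card : ℝ) * (9*(M:ℝ)*t) := nsmul_eq_mul _ _
    _ ≤ 3 * (9*(M:ℝ)*t) := by
        apply mul_le_mul_of_nonneg_right
        · exact_mod_cast hcard3
        · have hM0 : (0:ℝ) ≤ (M:ℝ) := Nat.cast_nonneg _
          nlinarith
    _ = 27 * (M:ℝ) * t := by ring

lemma OL_permsum (dist : V → V → ℝ) (u v : V) :
    ∑ w : V, ((Finset.univ.filter fun π : V ≃ Fin (Fintype.card V) => ∀ z : V,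
        min (dist z u) (dist z v) ≤ min (dist w u) (dist w v) → z ≠ w → π w < π z).card : ℝ)
      ≤ (Fintype.card (V ≃ Fin (Fintype.card V)) : ℝ)
          * (1 + Real.log (Fintype.card V)) := by
  set F : V → ℝ := fun z => min (dist z u) (dist z v) with hF
  have hstep : ∀ w : V, ((Finset.univ.filter fun π : V ≃ Fin (Fintype.card V) => ∀ z : V,
      F z ≤ F w → z ≠ w → π w < π z).card : ℝ)
      = (Fintype.card (V ≃ Fin (Fintype.card V)) : ℝ)
        * (1 / ((Finset.univ.filter fun z => F z ≤ F w).card : ℝ)) := by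
    intro w
    set S : Finset V := Finset.univ.filter fun z => F z ≤ F w with hS
    have hwS : w ∈ S := by
      rw [hS, Finset.mem_filter]
      exact ⟨Finset.mem_univ w, le_refl _⟩
    have hSpos : 0 < (S.card : ℝ) := by
      have := Finset.card_pos.mpr ⟨w, hwS⟩
      exact_mod_cast this
    have hpc := OL_permcount S w hwS
    have hsets : (Finset.univ.filter fun π : V ≃ Fin (Fintype.card V) => ∀ z : V,
        F z ≤ F w → z ≠ w → π w < π z)
        = (Finset.univ.filter fun π : V ≃ Fin (Fintype.card V) =>
          ∀ z ∈ S, z ≠ w → π w < π z) := by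
      apply Finset.filter_congr
      intro π _
      constructor
      · intro h z hz
        rw [hS, Finset.mem_filter] at hz
        exact h z hz.2
      · intro h z hz
        exact h z (by rw [hS, Finset.mem_filter]; exact ⟨Finset.mem_univ z, hz⟩)
    rw [hsets]
    have hcast : (((Finset.univ.filter fun π : V ≃ Fin (Fintype.card V) =>
        ∀ z ∈ S, z ≠ w → π w < π z).card : ℝ)) * (S.card : ℝ)
        = (Fintype.card (V ≃ Fin (Fintype.card V)) : ℝ) := by
      exact_mod_cast congrArg (Nat.cast : ℕ → ℝ) hpc
    field_simp
    linarith [hcast]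
  calc ∑ w : V, ((Finset.univ.filter fun π : V ≃ Fin (Fintype.card V) => ∀ z : V,
        min (dist z u) (dist z v) ≤ min (dist w u) (dist w v) → z ≠ w → π w < π z).card : ℝ)
      = (Fintype.card (V ≃ Fin (Fintype.card V)) : ℝ)
        * ∑ w : V, 1 / ((Finset.univ.filter fun z => F z ≤ F w).card : ℝ) := by
        rw [Finset.mul_sum]
        apply Finset.sum_congr rfl
        intro w _
        exact hstep w
    _ ≤ (Fintype.card (V ≃ Fin (Fintype.card V)) : ℝ) * (1 + Real.log (Fintype.card V)) := by
        apply mul_le_mul_of_nonneg_left _ (Nat.cast_nonneg _)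
        calc ∑ w : V, 1 / ((Finset.univ.filter fun z => F z ≤ F w).card : ℝ)
            ≤ ∑ k ∈ Finset.range (Finset.univ : Finset V).card, (1:ℝ)/(k+1) :=
              OL_ranksum F (Finset.univ : Finset V).card Finset.univ rfl
          _ ≤ 1 + Real.log ((Finset.univ : Finset V).card) := OL_harm _
          _ = 1 + Real.log (Fintype.card V) := by rw [Finset.card_univ]
lemma OL_pair (hd : 1 ≤ d) (hm : IsMetric dist) (hs : Spreading d dist)
    (v₀ : V) (e : V ≃ Fin (Fintype.card V)) {L : ℕ} (hL : 1 ≤ L)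
    (hD : ∀ z y : V, dist z y ≤ (2:ℝ)^(L-1)/8)
    (hn : 2 ≤ Fintype.card V) (u v : V) :
    ∑ ω ∈ (Finset.univ : Finset ((V ≃ Fin (Fintype.card V)) × Fin (16*2^L))),
        |(OLq dist e ω.1 v₀ (16*2^L) ω.2 L u : ℝ) - (OLq dist e ω.1 v₀ (16*2^L) ω.2 L v : ℝ)|
          ^ ((1:ℝ)/(d:ℝ))
      ≤ (Fintype.card ((V ≃ Fin (Fintype.card V)) × Fin (16*2^L)) : ℝ)
        * (248 * (1 + Real.log (Fintype.card V))) * dist u v := by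
  have hd0 : (1:ℝ)/(d:ℝ) ≠ 0 := by positivity
  set M : ℕ := 16*2^L with hMdef
  have hM : 0 < M := by positivity
  have hMcast : (M:ℝ) = 16 * 2^L := by rw [hMdef]; push_cast; ring
  have hlogn : (0:ℝ) ≤ Real.log (Fintype.card V) := by
    apply Real.log_nonneg
    have : (2:ℝ) ≤ (Fintype.card V : ℝ) := by exact_mod_cast hn
    linarith
  rcases eq_or_ne u v with rfl | huv
  · rw [hm.1 u, mul_zero]
    apply le_of_eq
    apply Finset.sum_eq_zero
    intro ω _
    rw [sub_self, abs_zero, Real.zero_rpow hd0]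
  -- distinct points
  set t : ℝ := dist u v with ht
  have ht14 : (1:ℝ)/4 ≤ t := OL_mindist hm hs u v huv
  have ht0 : (0:ℝ) < t := by linarith
  set P : ℕ := Fintype.card (V ≃ Fin (Fintype.card V)) with hP
  have hNcard : (Fintype.card ((V ≃ Fin (Fintype.card V)) × Fin M) : ℝ) = (P:ℝ) * M := by
    rw [Fintype.card_prod, Fintype.card_fin]; push_cast; ring
  -- step A : bound each omega by the indicator sum
  have hA : ∑ ω ∈ (Finset.univ : Finset ((V ≃ Fin (Fintype.card V)) × Fin M)),
      |(OLq dist e ω.1 v₀ M ω.2 L u : ℝ) - (OLq dist e ω.1 v₀ M ω.2 L v : ℝ)| ^ ((1:ℝ)/(d:ℝ))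
      ≤ 8 * ∑ j ∈ Finset.range L, (2:ℝ)^j *
          ((Finset.univ.filter fun ω : (V ≃ Fin (Fintype.card V)) × Fin M =>
            OLcenter dist ω.1 (OLrho M ω.2 j) u ≠ OLcenter dist ω.1 (OLrho M ω.2 j) v).card : ℝ) := by
    calc ∑ ω ∈ (Finset.univ : Finset ((V ≃ Fin (Fintype.card V)) × Fin M)),
        |(OLq dist e ω.1 v₀ M ω.2 L u : ℝ) - (OLq dist e ω.1 v₀ M ω.2 L v : ℝ)| ^ ((1:ℝ)/(d:ℝ))
        ≤ ∑ ω ∈ (Finset.univ : Finset ((V ≃ Fin (Fintype.card V)) × Fin M)),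
            8 * ∑ j ∈ Finset.range L, (2:ℝ)^j *
              (if OLcenter dist ω.1 (OLrho M ω.2 j) u ≠ OLcenter dist ω.1 (OLrho M ω.2 j) v
                then 1 else 0) := by
          apply Finset.sum_le_sum
          intro ω _
          exact OL_peromega hd hm hs v₀ e ω.1 hM ω.2 hL hD u v
      _ = 8 * ∑ j ∈ Finset.range L, (2:ℝ)^j *
          ((Finset.univ.filter fun ω : (V ≃ Fin (Fintype.card V)) × Fin M =>
            OLcenter dist ω.1 (OLrho M ω.2 j) u ≠ OLcenter dist ω.1 (OLrho M ω.2 j) v).card : ℝ) := by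
          rw [← Finset.mul_sum, Finset.sum_comm]
          congr 1
          apply Finset.sum_congr rfl
          intro j _
          rw [← Finset.mul_sum]
          congr 1
          rw [Finset.sum_boole]
  -- split into low and high scales
  rw [← Finset.sum_filter_add_sum_filter_not (Finset.range L)
    (fun j => (2:ℝ)^j ≤ 2*t)] at hA
  -- low scales
  have hlow : ∑ j ∈ (Finset.range L).filter (fun j => (2:ℝ)^j ≤ 2*t), (2:ℝ)^j *
      ((Finset.univ.filter fun ω : (V ≃ Fin (Fintype.card V)) × Fin M =>
        OLcenter dist ω.1 (OLrho M ω.2 j) u ≠ OLcenter dist ω.1 (OLrho M ω.2 j) v).card : ℝ)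
      ≤ ((P:ℝ)*M) * (4*t) := by
    calc ∑ j ∈ (Finset.range L).filter (fun j => (2:ℝ)^j ≤ 2*t), (2:ℝ)^j *
        ((Finset.univ.filter fun ω : (V ≃ Fin (Fintype.card V)) × Fin M =>
          OLcenter dist ω.1 (OLrho M ω.2 j) u ≠ OLcenter dist ω.1 (OLrho M ω.2 j) v).card : ℝ)
        ≤ ∑ j ∈ (Finset.range L).filter (fun j => (2:ℝ)^j ≤ 2*t), (2:ℝ)^j * ((P:ℝ)*M) := by
          apply Finset.sum_le_sum
          intro j _
          apply mul_le_mul_of_nonneg_left _ (by positivity)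
          calc ((Finset.univ.filter fun ω : (V ≃ Fin (Fintype.card V)) × Fin M =>
              OLcenter dist ω.1 (OLrho M ω.2 j) u ≠ OLcenter dist ω.1 (OLrho M ω.2 j) v).card : ℝ)
              ≤ ((Finset.univ : Finset ((V ≃ Fin (Fintype.card V)) × Fin M)).card : ℝ) := by
                exact_mod_cast Finset.card_le_card (Finset.filter_subset _ _)
            _ = (P:ℝ)*M := by rw [Finset.card_univ, hNcard]
      _ = ((P:ℝ)*M) * ∑ j ∈ (Finset.range L).filter (fun j => (2:ℝ)^j ≤ 2*t), (2:ℝ)^j := by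
          rw [← Finset.sum_mul]; ring
      _ ≤ ((P:ℝ)*M) * (4*t) := by
          apply mul_le_mul_of_nonneg_left (OL_lowsum L t ht0) (by positivity)
  -- high scales
  have hhigh : ∑ j ∈ (Finset.range L).filter (fun j => ¬ ((2:ℝ)^j ≤ 2*t)), (2:ℝ)^j *
      ((Finset.univ.filter fun ω : (V ≃ Fin (Fintype.card V)) × Fin M =>
        OLcenter dist ω.1 (OLrho M ω.2 j) u ≠ OLcenter dist ω.1 (OLrho M ω.2 j) v).card : ℝ)
      ≤ 27*(M:ℝ)*t * ((P:ℝ) * (1 + Real.log (Fintype.card V))) := by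
    have hcnt : ∀ j : ℕ, ((Finset.univ.filter fun ω : (V ≃ Fin (Fintype.card V)) × Fin M =>
        OLcenter dist ω.1 (OLrho M ω.2 j) u ≠ OLcenter dist ω.1 (OLrho M ω.2 j) v).card : ℝ)
        ≤ ∑ w : V,
          ((Finset.univ.filter fun π : V ≃ Fin (Fintype.card V) => ∀ z : V,
             min (dist z u) (dist z v) ≤ min (dist w u) (dist w v) → z ≠ w → π w < π z).card : ℝ)
        * ((Finset.univ.filter fun m : Fin M =>
             min (dist w u) (dist w v) ≤ OLrho M m j
               ∧ OLrho M m j < max (dist w u) (dist w v)).card : ℝ) :=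
      fun j => OL_cnt hm hs u v j hM
    have hinner : ∀ w : V, ∑ j ∈ (Finset.range L).filter (fun j => ¬((2:ℝ)^j ≤ 2*t)),
        (2:ℝ)^j * ((Finset.univ.filter fun m : Fin M =>
          min (dist w u) (dist w v) ≤ OLrho M m j
            ∧ OLrho M m j < max (dist w u) (dist w v)).card : ℝ)
        ≤ 27 * (M:ℝ) * t := fun w => OL_inner hm u v w ht14
    have h27 : (0:ℝ) ≤ 27*(M:ℝ)*t :=
      mul_nonneg (mul_nonneg (by norm_num) (Nat.cast_nonneg M)) (le_of_lt ht0)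
    calc ∑ j ∈ (Finset.range L).filter (fun j => ¬ ((2:ℝ)^j ≤ 2*t)), (2:ℝ)^j *
        ((Finset.univ.filter fun ω : (V ≃ Fin (Fintype.card V)) × Fin M =>
          OLcenter dist ω.1 (OLrho M ω.2 j) u ≠ OLcenter dist ω.1 (OLrho M ω.2 j) v).card : ℝ)
        ≤ ∑ j ∈ (Finset.range L).filter (fun j => ¬ ((2:ℝ)^j ≤ 2*t)), (2:ℝ)^j *
          (∑ w : V,
          ((Finset.univ.filter fun π : V ≃ Fin (Fintype.card V) => ∀ z : V,
             min (dist z u) (dist z v) ≤ min (dist w u) (dist w v) → z ≠ w → π w < π z).card : ℝ)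
          * ((Finset.univ.filter fun m : Fin M =>
             min (dist w u) (dist w v) ≤ OLrho M m j
               ∧ OLrho M m j < max (dist w u) (dist w v)).card : ℝ)) := by
          apply Finset.sum_le_sum
          intro j _
          exact mul_le_mul_of_nonneg_left (hcnt j) (by positivity)
      _ = ∑ w : V,
          ((Finset.univ.filter fun π : V ≃ Fin (Fintype.card V) => ∀ z : V,
             min (dist z u) (dist z v) ≤ min (dist w u) (dist w v) → z ≠ w → π w < π z).card : ℝ)
          * (∑ j ∈ (Finset.range L).filter (fun j => ¬ ((2:ℝ)^j ≤ 2*t)), (2:ℝ)^j *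
            ((Finset.univ.filter fun m : Fin M =>
             min (dist w u) (dist w v) ≤ OLrho M m j
               ∧ OLrho M m j < max (dist w u) (dist w v)).card : ℝ)) := by
          simp only [Finset.mul_sum]
          rw [Finset.sum_comm]
          apply Finset.sum_congr rfl
          intro w _
          apply Finset.sum_congr rfl
          intro j _
          ring
      _ ≤ ∑ w : V,
          ((Finset.univ.filter fun π : V ≃ Fin (Fintype.card V) => ∀ z : V,
             min (dist z u) (dist z v) ≤ min (dist w u) (dist w v) → z ≠ w → π w < π z).card : ℝ)
          * (27 * (M:ℝ) * t) := by
          apply Finset.sum_le_sum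
          intro w _
          exact mul_le_mul_of_nonneg_left (hinner w) (Nat.cast_nonneg _)
      _ = (∑ w : V,
          ((Finset.univ.filter fun π : V ≃ Fin (Fintype.card V) => ∀ z : V,
             min (dist z u) (dist z v) ≤ min (dist w u) (dist w v) → z ≠ w → π w < π z).card : ℝ))
          * (27 * (M:ℝ) * t) := by
          rw [← Finset.sum_mul]
      _ ≤ ((Fintype.card (V ≃ Fin (Fintype.card V)) : ℝ) * (1 + Real.log (Fintype.card V)))
          * (27 * (M:ℝ) * t) := by
          exact mul_le_mul_of_nonneg_right (OL_permsum dist u v) h27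
      _ = 27*(M:ℝ)*t * ((P:ℝ) * (1 + Real.log (Fintype.card V))) := by
          rw [hP]; ring
  -- final combination
  calc ∑ ω ∈ (Finset.univ : Finset ((V ≃ Fin (Fintype.card V)) × Fin M)),
      |(OLq dist e ω.1 v₀ M ω.2 L u : ℝ) - (OLq dist e ω.1 v₀ M ω.2 L v : ℝ)| ^ ((1:ℝ)/(d:ℝ))
      ≤ 8 * (((P:ℝ)*M) * (4*t) + 27*(M:ℝ)*t * ((P:ℝ) * (1 + Real.log (Fintype.card V)))) := by
        apply hA.trans
        have := add_le_add hlow hhigh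
        linarith
    _ ≤ (Fintype.card ((V ≃ Fin (Fintype.card V)) × Fin M) : ℝ)
        * (248 * (1 + Real.log (Fintype.card V))) * t := by
        rw [hNcard]
        have hP0 : (0:ℝ) ≤ (P:ℝ) := Nat.cast_nonneg _
        have hM0 : (0:ℝ) ≤ (M:ℝ) := Nat.cast_nonneg _
        nlinarith [mul_nonneg (mul_nonneg hP0 hM0) (le_of_lt ht0),
          mul_nonneg (mul_nonneg (mul_nonneg hP0 hM0) (le_of_lt ht0)) hlogn]
/-- The ordering lemma in general dimension `d ≥ 1`: given a metric satisfying the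
`d`-dimensional spreading constraints, there is a bijection `q : V → {0, …, n-1}` with
`q v₀ = 0` whose weighted `d`-dimensional stretch `∑ w(u,v) |q(u) - q(v)|^(1/d)` is at
most `C_d log n` times the LP cost. -/
theorem ordering_lemma (d : ℕ) (hd : 1 ≤ d) :
    ∃ C : ℝ, 0 < C ∧
    ∀ (V : Type) [Fintype V] [DecidableEq V],
    ∀ (w : V → V → ℝ) (dist : V → V → ℝ) (v₀ : V),
      2 ≤ Fintype.card V →
      (∀ u v, w u v = w v u) → (∀ u v, 0 ≤ w u v) → (∀ v, w v v = 0) →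
      IsMetric dist →
      Spreading d dist →
      ∃ q : V → ℕ, Function.Injective q ∧ (∀ v, q v < Fintype.card V) ∧ q v₀ = 0 ∧
        (∑ u, ∑ v, w u v * |(q u : ℝ) - (q v : ℝ)| ^ ((1 : ℝ) / (d : ℝ))) / 2 ≤
          C * Real.log (Fintype.card V) * ((∑ u, ∑ v, w u v * dist u v) / 2) := by
  refine ⟨1000, by norm_num, ?_⟩
  intro V _ _ w dist v₀ hn hwsymm hwnn hwdiag hm hs
  classical
  -- diameter bound
  obtain ⟨D, hD0⟩ : ∃ D : ℝ, ∀ z y : V, dist z y ≤ D := by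
    have hne : ((Finset.univ ×ˢ Finset.univ : Finset (V × V))).Nonempty := by
      refine ⟨(v₀, v₀), ?_⟩
      rw [Finset.mem_product]
      exact ⟨Finset.mem_univ _, Finset.mem_univ _⟩
    refine ⟨(Finset.univ ×ˢ Finset.univ : Finset (V × V)).sup' hne (fun p => dist p.1 p.2), ?_⟩
    intro z y
    exact Finset.le_sup' (f := fun p : V × V => dist p.1 p.2)
      (show (z, y) ∈ _ by rw [Finset.mem_product]; exact ⟨Finset.mem_univ _, Finset.mem_univ _⟩)
  obtain ⟨L₀, hL₀⟩ : ∃ L₀ : ℕ, 8*D < 2^L₀ := pow_unbounded_of_one_lt (8*D) (by norm_num)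
  set L : ℕ := L₀ + 1 with hLdef
  have hL : 1 ≤ L := by omega
  have hD : ∀ z y : V, dist z y ≤ (2:ℝ)^(L-1)/8 := by
    intro z y
    have h1 : L - 1 = L₀ := by omega
    rw [h1]
    have := hD0 z y
    linarith
  have hM : 0 < 16*2^L := by positivity
  set e : V ≃ Fin (Fintype.card V) := Fintype.equivFin V with he
  -- pair bound and total bound
  have hpair : ∀ u v : V,
      ∑ ω ∈ (Finset.univ : Finset ((V ≃ Fin (Fintype.card V)) × Fin (16*2^L))),
        |(OLq dist e ω.1 v₀ (16*2^L) ω.2 L u : ℝ) - (OLq dist e ω.1 v₀ (16*2^L) ω.2 L v : ℝ)|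
          ^ ((1:ℝ)/(d:ℝ))
      ≤ (Fintype.card ((V ≃ Fin (Fintype.card V)) × Fin (16*2^L)) : ℝ)
        * (248 * (1 + Real.log (Fintype.card V))) * dist u v :=
    fun u v => OL_pair hd hm hs v₀ e hL hD hn u v
  have htotal : ∑ ω ∈ (Finset.univ : Finset ((V ≃ Fin (Fintype.card V)) × Fin (16*2^L))),
      (∑ u, ∑ v, w u v *
        |(OLq dist e ω.1 v₀ (16*2^L) ω.2 L u : ℝ) - (OLq dist e ω.1 v₀ (16*2^L) ω.2 L v : ℝ)|
          ^ ((1:ℝ)/(d:ℝ)))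
      ≤ ∑ ω ∈ (Finset.univ : Finset ((V ≃ Fin (Fintype.card V)) × Fin (16*2^L))),
        ((248 * (1 + Real.log (Fintype.card V))) * (∑ u, ∑ v, w u v * dist u v)) := by
    rw [Finset.sum_const, nsmul_eq_mul, Finset.card_univ]
    calc ∑ ω ∈ (Finset.univ : Finset ((V ≃ Fin (Fintype.card V)) × Fin (16*2^L))),
        (∑ u, ∑ v, w u v *
          |(OLq dist e ω.1 v₀ (16*2^L) ω.2 L u : ℝ) - (OLq dist e ω.1 v₀ (16*2^L) ω.2 L v : ℝ)|
            ^ ((1:ℝ)/(d:ℝ)))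
        = ∑ u, ∑ v, w u v *
            (∑ ω ∈ (Finset.univ : Finset ((V ≃ Fin (Fintype.card V)) × Fin (16*2^L))),
              |(OLq dist e ω.1 v₀ (16*2^L) ω.2 L u : ℝ)
                - (OLq dist e ω.1 v₀ (16*2^L) ω.2 L v : ℝ)| ^ ((1:ℝ)/(d:ℝ))) := by
          rw [Finset.sum_comm]
          apply Finset.sum_congr rfl
          intro u _
          rw [Finset.sum_comm]
          apply Finset.sum_congr rfl
          intro v _
          rw [Finset.mul_sum]
      _ ≤ ∑ u, ∑ v, w u v *
            ((Fintype.card ((V ≃ Fin (Fintype.card V)) × Fin (16*2^L)) : ℝ)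
              * (248 * (1 + Real.log (Fintype.card V))) * dist u v) := by
          apply Finset.sum_le_sum
          intro u _
          apply Finset.sum_le_sum
          intro v _
          exact mul_le_mul_of_nonneg_left (hpair u v) (hwnn u v)
      _ = (Fintype.card ((V ≃ Fin (Fintype.card V)) × Fin (16*2^L)) : ℝ)
          * (248 * (1 + Real.log (Fintype.card V)) * (∑ u, ∑ v, w u v * dist u v)) := by
          simp only [Finset.mul_sum]
          apply Finset.sum_congr rfl
          intro u _
          apply Finset.sum_congr rfl
          intro v _
          ring
  obtain ⟨ω, -, hω⟩ := Finset.exists_le_of_sum_le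
    (⟨(e, ⟨0, hM⟩), Finset.mem_univ _⟩ :
      (Finset.univ : Finset ((V ≃ Fin (Fintype.card V)) × Fin (16*2^L))).Nonempty) htotal
  refine ⟨OLq dist e ω.1 v₀ (16*2^L) ω.2 L,
    OLq_inj hm hs e ω.1 v₀ hM ω.2 hL,
    fun v => OLq_lt_card e ω.1 v₀ ω.2 L v,
    OLq_v₀ e ω.1 v₀ ω.2 L, ?_⟩
  -- final numeric step
  have hS0 : 0 ≤ ∑ u, ∑ v, w u v * dist u v := by
    apply Finset.sum_nonneg
    intro u _
    apply Finset.sum_nonneg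
    intro v _
    exact mul_nonneg (hwnn u v) (hm.2.1 u v)
  have hlogge : Real.log 2 ≤ Real.log (Fintype.card V) := by
    apply Real.log_le_log (by norm_num)
    exact_mod_cast hn
  have hlog2 : (0.6931471803:ℝ) < Real.log 2 := Real.log_two_gt_d9
  have hfin : 248 * (1 + Real.log (Fintype.card V)) * (∑ u, ∑ v, w u v * dist u v)
      ≤ 1000 * Real.log (Fintype.card V) * (∑ u, ∑ v, w u v * dist u v) := by
    nlinarith [hS0, hlogge, hlog2]
  have := hω.trans hfin
  linarith
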